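/- arXiv:1910.05967 — 2 statements merged into one kernel-verified Lean document; each statement's English description precedes it below -/
import Mathlib

section
/- Sherman–Morrison step for the SINR maximum: let A be an n×n Hermitian positive definite complex matrix, u ∈ ℂⁿ, and c ≥ 0 a real number. Set x = c · u^H (A + c u u^H)⁻¹ u. Then 0 ≤ x < 1 and x/(1 − x) = c · u^H A⁻¹ u. -/
open Matrix BigOperators
open scoped ComplexOrder

/-- **Sherman–Morrison step for the SINR maximum.**
Let `A` be an `n × n` Hermitian positive definite complex matrix, `u ∈ ℂⁿ`, and
`c ≥ 0` a real number.  Set `x = c · uᴴ (A + c u uᴴ)⁻¹ u` (a real number,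
expressed via the real part of the Hermitian quadratic form).  Then `0 ≤ x < 1`
and `x / (1 − x) = c · uᴴ A⁻¹ u`. -/
theorem stmt_4 {n : ℕ} (A : Matrix (Fin n) (Fin n) ℂ) (hA : A.PosDef)
    (u : Fin n → ℂ) (c : ℝ) (hc : 0 ≤ c)
    (x : ℝ)
    (hx : x = c * (star u ⬝ᵥ ((A + (c : ℂ) • vecMulVec u (star u))⁻¹ *ᵥ u)).re) :
    0 ≤ x ∧ x < 1 ∧ x / (1 - x) = c * (star u ⬝ᵥ (A⁻¹ *ᵥ u)).re := by
  classical
  have hr1 : ((c : ℂ) • vecMulVec u (star u)).PosSemidef := by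
    have key : (c : ℂ) • vecMulVec u (star u)
        = (replicateCol (Fin 1) ((Real.sqrt c : ℂ) • u)) * (replicateCol (Fin 1) ((Real.sqrt c : ℂ) • u))ᴴ := by
      ext i j
      simp only [Matrix.smul_apply, vecMulVec_apply, mul_apply, replicateCol_apply, conjTranspose_apply,
        Pi.smul_apply, smul_eq_mul, Pi.star_apply, star_mul', Finset.sum_const,
        Finset.card_univ, Fintype.card_fin, one_smul, Complex.star_def, Complex.conj_ofReal]
      rw [show ((Real.sqrt c : ℝ) : ℂ) * u i * ((Real.sqrt c : ℝ) * (starRingEnd ℂ) (u j))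
          = (((Real.sqrt c * Real.sqrt c : ℝ)) : ℂ) * (u i * (starRingEnd ℂ) (u j)) by
        push_cast; ring, Real.mul_self_sqrt hc]
    rw [key]
    exact posSemidef_self_mul_conjTranspose _
  set B := A + (c : ℂ) • vecMulVec u (star u) with hBdef
  have hB : B.PosDef := hA.add_posSemidef hr1
  have hAinv : (A⁻¹).PosDef := hA.inv
  set q : ℂ := star u ⬝ᵥ (A⁻¹ *ᵥ u) with hq
  have hq0 : 0 ≤ q := hAinv.posSemidef.dotProduct_mulVec_nonneg u
  obtain ⟨hqre, hqim⟩ := Complex.le_def.mp hq0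
  simp only [Complex.zero_re, Complex.zero_im] at hqre hqim
  have hqeq : q = (q.re : ℂ) := by
    apply Complex.ext <;> simp [hqim]
  set s : ℝ := c * q.re with hs
  have hs0 : 0 ≤ s := mul_nonneg hc hqre
  have h1s : (0:ℝ) < 1 + s := by linarith
  have hAu : A *ᵥ (A⁻¹ *ᵥ u) = u := by
    rw [mulVec_mulVec, mul_nonsing_inv _ (isUnit_iff_isUnit_det _ |>.mp hA.isUnit), one_mulVec]
  have hmv : (vecMulVec u (star u)) *ᵥ (A⁻¹ *ᵥ u) = q • u := by
    ext i
    simp only [mulVec, dotProduct, vecMulVec_apply, Pi.smul_apply, smul_eq_mul, hq]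
    rw [Finset.sum_congr rfl (fun j _ => mul_assoc _ _ _), ← Finset.mul_sum]
    ring_nf
  have hBv : B *ᵥ (A⁻¹ *ᵥ u) = (1 + (c : ℂ) * q) • u := by
    rw [hBdef, add_mulVec, smul_mulVec, hmv, hAu]
    ext i
    simp [add_smul, smul_smul]
    ring
  have hBinv : B⁻¹ * B = 1 := nonsing_inv_mul _ (isUnit_iff_isUnit_det _ |>.mp hB.isUnit)
  have hkey : (1 + (c : ℂ) * q) • (B⁻¹ *ᵥ u) = A⁻¹ *ᵥ u := by
    calc (1 + (c : ℂ) * q) • (B⁻¹ *ᵥ u) = B⁻¹ *ᵥ ((1 + (c : ℂ) * q) • u) :=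
          (mulVec_smul _ _ _).symm
      _ = B⁻¹ *ᵥ (B *ᵥ (A⁻¹ *ᵥ u)) := by rw [hBv]
      _ = (B⁻¹ * B) *ᵥ (A⁻¹ *ᵥ u) := by rw [mulVec_mulVec]
      _ = A⁻¹ *ᵥ u := by rw [hBinv, one_mulVec]
  have hne : (1 + (c : ℂ) * q) ≠ 0 := by
    rw [hqeq, ← Complex.ofReal_one, ← Complex.ofReal_mul, ← Complex.ofReal_add]
    exact_mod_cast (by positivity : (0:ℝ) < 1 + c * q.re).ne'
  have hdot : star u ⬝ᵥ (B⁻¹ *ᵥ u) = q / (1 + (c : ℂ) * q) := by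
    have h3 := congrArg (fun v => star u ⬝ᵥ v) hkey
    simp only [dotProduct_smul, smul_eq_mul] at h3
    rw [← hq] at h3
    rw [eq_div_iff hne]
    linear_combination h3
  have hxval : x = s / (1 + s) := by
    rw [hx, hdot, hqeq]
    rw [show (1 + (c:ℂ) * ((q.re:ℝ):ℂ)) = ((1 + s : ℝ) : ℂ) by rw [hs]; push_cast; ring]
    rw [← Complex.ofReal_div, Complex.ofReal_re, hs]
    field_simp
  refine ⟨?_, ?_, ?_⟩
  · rw [hxval]; positivity
  · rw [hxval, div_lt_one h1s]; linarith
  · rw [hxval]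
    have hden : 1 - s / (1 + s) = 1 / (1 + s) := by field_simp; ring
    rw [hden]
    field_simp
end

section
/- Statistical eigen hybrid beamforming matches fully digital beamforming (the paper's Theorem 2, exact-correlation version): suppose R̄ = Ũ Λ̃ Ũ^H with Ũ^H Ũ = I_{N_H}, and for each k suppose H_k^H H_k = Ũ_k Λ̃_k Ũ_k^H with Ũ_k^H Ũ_k = I_{N_H}, and let W_k = [Ũ_k V_k] be N×N unitary matrices with Ũ_k^H V_k = 0 and V_k^H V_k = I_{N−N_H}. Define the hybrid effective covariance R̂^HB = W^H R̄ W with W = [Ũ 0] ∈ ℂ^{N×N_RF} (zero columns appended), and the fully digital effective covariance R̂^FD = (1/K) Σ_{k=1}^{K} W_k^H H_k^H H_k W_k. If in addition (1/K) Σ_{k=1}^{K} Λ̃_k = Λ̃, then tr{ c R̂^HB (c' R̂^HB + ψ I_{N_RF})⁻¹ } = tr{ c R̂^FD (c' R̂^FD + ψ I_N)⁻¹ }, i.e., the hybrid scheme achieves the same average SINR as the fully digital scheme. -/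
open Matrix BigOperators

lemma trace_fromBlocks_aux {a b : Type*} [Fintype a] [Fintype b] [DecidableEq a] [DecidableEq b]
    (A : Matrix a a ℂ) (B : Matrix a b ℂ) (C : Matrix b a ℂ) (D : Matrix b b ℂ) :
    (fromBlocks A B C D).trace = A.trace + D.trace := by
  simp [Matrix.trace, Fintype.sum_sum_type, fromBlocks]

lemma block_trace_aux {NH p : ℕ} (Λ : Matrix (Fin NH) (Fin NH) ℂ) (c c' ψ : ℂ) (hψ : ψ ≠ 0) :
    ((c • fromBlocks Λ 0 0 (0 : Matrix (Fin p) (Fin p) ℂ)) *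
      (c' • fromBlocks Λ 0 0 (0 : Matrix (Fin p) (Fin p) ℂ) + ψ • 1)⁻¹).trace
      = (c • Λ * (c' • Λ + ψ • 1)⁻¹).trace := by
  have h1 : c' • fromBlocks Λ 0 0 (0 : Matrix (Fin p) (Fin p) ℂ)
      + ψ • (1 : Matrix (Fin NH ⊕ Fin p) (Fin NH ⊕ Fin p) ℂ)
      = fromBlocks (c' • Λ + ψ • 1) 0 0 (ψ • 1) := by
    rw [← fromBlocks_one, fromBlocks_smul, fromBlocks_smul, fromBlocks_add]
    simp
  have h2 : c • fromBlocks Λ 0 0 (0 : Matrix (Fin p) (Fin p) ℂ)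
      = fromBlocks (c • Λ) 0 0 (0 : Matrix (Fin p) (Fin p) ℂ) := by
    rw [fromBlocks_smul]; simp
  have hD : IsUnit (ψ • (1 : Matrix (Fin p) (Fin p) ℂ)) := by
    rw [Matrix.isUnit_iff_isUnit_det, Matrix.det_smul, Matrix.det_one, mul_one]
    exact (isUnit_iff_ne_zero.mpr (pow_ne_zero _ hψ))
  by_cases hA : IsUnit (c' • Λ + ψ • (1 : Matrix (Fin NH) (Fin NH) ℂ))
  · rw [h1, h2, inv_fromBlocks_zero₂₁_of_isUnit_iff _ _ _ (iff_of_true hA hD),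
      fromBlocks_multiply]
    simp [trace_fromBlocks_aux]
  · have hblk : ¬ IsUnit (fromBlocks (c' • Λ + ψ • 1) 0 0
        (ψ • (1 : Matrix (Fin p) (Fin p) ℂ))) := by
      rw [isUnit_fromBlocks_zero₂₁]
      tauto
    rw [h1, nonsing_inv_eq_ringInverse, Ring.inverse_non_unit _ hblk,
      nonsing_inv_eq_ringInverse, Ring.inverse_non_unit _ hA]
    simp

/-- **Theorem 2 of the paper (exact-correlation version):** statistical eigen hybrid
beamforming matches fully digital beamforming.

Setup: `K ≥ 1` subcarriers with `m × N` channel matrices `H_k`, average spatial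
channel covariance `R̄ = (1/K) ∑_k H_kᴴ H_k`, numbers `N_H ≤ N_RF ≤ N` (here we
write `N_RF = N_H + r` and `N = N_H + s`), weights `c ≥ 0`, `c' ≥ 0`, noise `ψ > 0`.

Suppose `R̄ = Ũ Λ̃ Ũᴴ` with `Ũᴴ Ũ = I_{N_H}`, for each `k` suppose
`H_kᴴ H_k = Ũ_k Λ̃_k Ũ_kᴴ` with `Ũ_kᴴ Ũ_k = I_{N_H}`, and let
`W_k = [Ũ_k V_k]` be `N × N` unitary matrices with `Ũ_kᴴ V_k = 0` and
`V_kᴴ V_k = I_{N−N_H}`.  Define the hybrid effective covariance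
`R̂^HB = Wᴴ R̄ W` with `W = [Ũ 0] ∈ ℂ^{N×N_RF}` (zero columns appended), and the
fully digital effective covariance `R̂^FD = (1/K) ∑_k W_kᴴ H_kᴴ H_k W_k`.
If in addition `(1/K) ∑_k Λ̃_k = Λ̃`, then
`tr{c R̂^HB (c' R̂^HB + ψ I_{N_RF})⁻¹} = tr{c R̂^FD (c' R̂^FD + ψ I_N)⁻¹}`,
i.e., the hybrid scheme achieves the same average SINR as the fully digital one. -/
theorem stmt_6 {K m N NH NRF r s : ℕ} (hK : 1 ≤ K)
    (hNRF : NH + r = NRF) (hN : NH + s = N) (hle : NRF ≤ N)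
    (H : Fin K → Matrix (Fin m) (Fin N) ℂ)
    (c c' ψ : ℝ) (hc : 0 ≤ c) (hc' : 0 ≤ c') (hψ : 0 < ψ)
    (Rbar : Matrix (Fin N) (Fin N) ℂ)
    (hRbar : Rbar = ((K : ℂ))⁻¹ • ∑ k, (H k)ᴴ * H k)
    (U : Matrix (Fin N) (Fin NH) ℂ) (Λ : Matrix (Fin NH) (Fin NH) ℂ)
    (hUU : Uᴴ * U = 1) (hR : Rbar = U * Λ * Uᴴ)
    (Uk : Fin K → Matrix (Fin N) (Fin NH) ℂ)
    (Λk : Fin K → Matrix (Fin NH) (Fin NH) ℂ)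
    (Vk : Fin K → Matrix (Fin N) (Fin s) ℂ)
    (hUkUk : ∀ k, (Uk k)ᴴ * Uk k = 1)
    (hHk : ∀ k, (H k)ᴴ * H k = Uk k * Λk k * (Uk k)ᴴ)
    (hUkVk : ∀ k, (Uk k)ᴴ * Vk k = 0)
    (hVkVk : ∀ k, (Vk k)ᴴ * Vk k = 1)
    (hWkUnitary : ∀ k, (fromCols (Uk k) (Vk k))ᴴ * fromCols (Uk k) (Vk k) = 1 ∧
      fromCols (Uk k) (Vk k) * (fromCols (Uk k) (Vk k))ᴴ = 1)
    (hΛ : ((K : ℂ))⁻¹ • ∑ k, Λk k = Λ)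
    (W : Matrix (Fin N) (Fin NH ⊕ Fin r) ℂ)
    (hW : W = fromCols U 0)
    (RHB : Matrix (Fin NH ⊕ Fin r) (Fin NH ⊕ Fin r) ℂ)
    (hRHB : RHB = Wᴴ * Rbar * W)
    (RFD : Matrix (Fin NH ⊕ Fin s) (Fin NH ⊕ Fin s) ℂ)
    (hRFD : RFD = ((K : ℂ))⁻¹ • ∑ k,
      (fromCols (Uk k) (Vk k))ᴴ * ((H k)ᴴ * H k) * fromCols (Uk k) (Vk k)) :
    ((c : ℂ) • RHB * ((c' : ℂ) • RHB + (ψ : ℂ) • 1)⁻¹).trace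
      = ((c : ℂ) • RFD * ((c' : ℂ) • RFD + (ψ : ℂ) • 1)⁻¹).trace := by
  have hψ' : (ψ : ℂ) ≠ 0 := by
    exact_mod_cast (ne_of_gt hψ)
  have hRHB' : RHB = fromBlocks Λ 0 0 (0 : Matrix (Fin r) (Fin r) ℂ) := by
    rw [hRHB, hW, hR, conjTranspose_fromCols_eq_fromRows_conjTranspose,
      fromRows_mul, fromRows_mul_fromCols]
    simp only [conjTranspose_zero, Matrix.zero_mul, Matrix.mul_zero]
    have e : Uᴴ * (U * Λ * Uᴴ) * U = Λ := by
      calc Uᴴ * (U * Λ * Uᴴ) * U = (Uᴴ * U) * Λ * (Uᴴ * U) := by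
            simp only [Matrix.mul_assoc]
        _ = Λ := by rw [hUU]; simp
    rw [e]
  have hterm : ∀ k, (fromCols (Uk k) (Vk k))ᴴ * ((H k)ᴴ * H k) * fromCols (Uk k) (Vk k)
      = fromBlocks (Λk k) 0 0 (0 : Matrix (Fin s) (Fin s) ℂ) := by
    intro k
    have hVU : (Vk k)ᴴ * Uk k = 0 := by
      have := congrArg conjTranspose (hUkVk k)
      simpa [conjTranspose_mul] using this
    rw [hHk k, conjTranspose_fromCols_eq_fromRows_conjTranspose,
      fromRows_mul, fromRows_mul_fromCols]
    have e11 : (Uk k)ᴴ * (Uk k * Λk k * (Uk k)ᴴ) * Uk k = Λk k := by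
      calc (Uk k)ᴴ * (Uk k * Λk k * (Uk k)ᴴ) * Uk k
          = ((Uk k)ᴴ * Uk k) * Λk k * ((Uk k)ᴴ * Uk k) := by simp only [Matrix.mul_assoc]
        _ = Λk k := by rw [hUkUk k]; simp
    have e12 : (Uk k)ᴴ * (Uk k * Λk k * (Uk k)ᴴ) * Vk k = 0 := by
      calc (Uk k)ᴴ * (Uk k * Λk k * (Uk k)ᴴ) * Vk k
          = ((Uk k)ᴴ * Uk k) * Λk k * ((Uk k)ᴴ * Vk k) := by simp only [Matrix.mul_assoc]
        _ = 0 := by rw [hUkVk k]; simp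
    have e21 : (Vk k)ᴴ * (Uk k * Λk k * (Uk k)ᴴ) * Uk k = 0 := by
      calc (Vk k)ᴴ * (Uk k * Λk k * (Uk k)ᴴ) * Uk k
          = ((Vk k)ᴴ * Uk k) * Λk k * ((Uk k)ᴴ * Uk k) := by simp only [Matrix.mul_assoc]
        _ = 0 := by rw [hVU]; simp
    have e22 : (Vk k)ᴴ * (Uk k * Λk k * (Uk k)ᴴ) * Vk k = 0 := by
      calc (Vk k)ᴴ * (Uk k * Λk k * (Uk k)ᴴ) * Vk k
          = ((Vk k)ᴴ * Uk k) * Λk k * ((Uk k)ᴴ * Vk k) := by simp only [Matrix.mul_assoc]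
        _ = 0 := by rw [hVU]; simp
    rw [e11, e12, e21, e22]
  have hRFD' : RFD = fromBlocks Λ 0 0 (0 : Matrix (Fin s) (Fin s) ℂ) := by
    rw [hRFD]
    have : ∑ k, (fromCols (Uk k) (Vk k))ᴴ * ((H k)ᴴ * H k) * fromCols (Uk k) (Vk k)
        = fromBlocks (∑ k, Λk k) 0 0 (0 : Matrix (Fin s) (Fin s) ℂ) := by
      rw [Finset.sum_congr rfl (fun k _ => hterm k)]
      ext (i | i) (j | j) <;>
        simp [Matrix.sum_apply, fromBlocks]
    rw [this, fromBlocks_smul, ← hΛ]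
    simp
  rw [hRHB', hRFD', block_trace_aux Λ _ _ _ hψ', block_trace_aux Λ _ _ _ hψ']
end
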